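/- Let N be a binary tree-based phylogenetic network and let (a_1, ..., a_k) be an N-fence of length k ≥ 3 in its zig-zag decomposition, ordered so that tail(a_1) is a reticulation. Then every cherry cover of N contains, for each j with 1 ≤ j ≤ (k−1)/2, the reticulated cherry shape consisting of the arcs {head(a_{2j−1})c_{2j−1}, a_{2j}, a_{2j+1}}, where c_{2j−1} denotes the child of head(a_{2j−1}). -/

import Mathlib

namespace PhyloNet

/-- A binary phylogenetic network, encoded on vertex set `verts ⊆ ℕ`. -/
structure Network where
  verts : Finset ℕ
  arc : ℕ → ℕ → Bool
  root : ℕ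
  root_mem : root ∈ verts
  arc_mem : ∀ u v : ℕ, arc u v = true → u ∈ verts ∧ v ∈ verts
  acyclic : ∀ v : ℕ, ¬ Relation.TransGen (fun a b : ℕ => arc a b = true) v v
  root_indeg : (verts.filter fun u => arc u root = true).card = 0
  root_outdeg : (verts.filter fun w => arc root w = true).card = 1
  nonroot_deg : ∀ v ∈ verts, v ≠ root →
    ((verts.filter fun u => arc u v = true).card = 1 ∧
      (verts.filter fun w => arc v w = true).card = 2) ∨
    ((verts.filter fun u => arc u v = true).card = 2 ∧
      (verts.filter fun w => arc v w = true).card = 1) ∨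
    ((verts.filter fun u => arc u v = true).card = 1 ∧
      (verts.filter fun w => arc v w = true).card = 0)

def inDeg (N : Network) (v : ℕ) : ℕ := (N.verts.filter fun u => N.arc u v = true).card

def outDeg (N : Network) (v : ℕ) : ℕ := (N.verts.filter fun w => N.arc v w = true).card

def IsLeaf (N : Network) (v : ℕ) : Prop := v ∈ N.verts ∧ inDeg N v = 1 ∧ outDeg N v = 0

def IsRet (N : Network) (v : ℕ) : Prop := v ∈ N.verts ∧ inDeg N v = 2

def IsTreeVert (N : Network) (v : ℕ) : Prop := v ∈ N.verts ∧ inDeg N v = 1 ∧ outDeg N v = 2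

def IsInternal (N : Network) (v : ℕ) : Prop := v ∈ N.verts ∧ v ≠ N.root ∧ ¬ IsLeaf N v

def IsTree (N : Network) : Prop := ∀ v : ℕ, ¬ IsRet N v

noncomputable def retCount (N : Network) : ℕ := {v : ℕ | IsRet N v}.ncard

/-- Tree-child: every non-leaf vertex has a child that is a tree vertex or a leaf. -/
def IsTreeChild (N : Network) : Prop :=
  ∀ v ∈ N.verts, ¬ IsLeaf N v → ∃ w : ℕ, N.arc v w = true ∧ (IsTreeVert N w ∨ IsLeaf N w)

/-- An omnian: an internal vertex all of whose children are reticulations. -/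
def IsOmnian (N : Network) (v : ℕ) : Prop :=
  IsInternal N v ∧ ∀ w : ℕ, N.arc v w = true → IsRet N w

noncomputable def omnianCount (N : Network) : ℕ := {v : ℕ | IsOmnian N v}.ncard

/-- `N'` is obtained from `N` by adding a leaf to the arc `uv`: the arc is subdivided
by a fresh vertex `w`, and a fresh leaf `x` is attached to `w`. -/
def IsLeafAdditionOn (N N' : Network) (u v : ℕ) : Prop :=
  N.arc u v = true ∧ ∃ w x : ℕ, w ∉ N.verts ∧ x ∉ N.verts ∧ w ≠ x ∧
    N'.verts = insert w (insert x N.verts) ∧ N'.root = N.root ∧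
    ∀ a b : ℕ, (N'.arc a b = true ↔
      ((N.arc a b = true ∧ ¬ (a = u ∧ b = v)) ∨ (a = u ∧ b = w) ∨
        (a = w ∧ b = v) ∨ (a = w ∧ b = x)))

def IsLeafAddition (N N' : Network) : Prop := ∃ u v : ℕ, IsLeafAdditionOn N N' u v

/-- `N'` is obtained from `N` by adding a leaf to a reticulation arc. -/
def IsRetArcLeafAddition (N N' : Network) : Prop :=
  ∃ u v : ℕ, IsRet N v ∧ IsLeafAdditionOn N N' u v

/-- `P` holds after exactly `k` steps of relation `step` starting from `N`. -/
def ReachableBy (step : Network → Network → Prop) (N : Network) (k : ℕ)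
    (P : Network → Prop) : Prop :=
  ∃ M : ℕ → Network, M 0 = N ∧ (∀ i : ℕ, i < k → step (M i) (M (i + 1))) ∧ P (M k)

/-- The minimum number of leaf additions needed to bring `N` into the class `P`. -/
noncomputable def leafAddDist (P : Network → Prop) (N : Network) : ℕ :=
  sInf {k : ℕ | ReachableBy IsLeafAddition N k P}

noncomputable def LTC (N : Network) : ℕ := leafAddDist IsTreeChild N

/-- Reduction of a cherry (x,y): delete the leaf x and suppress its parent p
(whose own parent is q, gaining the arc q → y). -/
def ReducesCherry (N N' : Network) (x y : ℕ) : Prop :=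
  ∃ p q : ℕ, IsLeaf N x ∧ IsLeaf N y ∧ x ≠ y ∧
    N.arc p x = true ∧ N.arc p y = true ∧ N.arc q p = true ∧
    N'.verts = (N.verts.erase x).erase p ∧ N'.root = N.root ∧
    ∀ a b : ℕ, (N'.arc a b = true ↔
      (N.arc a b = true ∧ a ≠ p ∧ b ≠ p ∧ b ≠ x) ∨ (a = q ∧ b = y))

/-- Reduction of a reticulated cherry (x,y): delete the arc from the parent p_y of y
to the reticulation parent p_x of x, and clean up (suppressing p_x and p_y). -/
def ReducesRetCherry (N N' : Network) (x y : ℕ) : Prop :=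
  ∃ px py z q : ℕ, IsLeaf N x ∧ IsLeaf N y ∧ IsRet N px ∧
    N.arc px x = true ∧ N.arc py px = true ∧ N.arc py y = true ∧
    N.arc z px = true ∧ z ≠ py ∧ N.arc q py = true ∧
    N'.verts = (N.verts.erase px).erase py ∧ N'.root = N.root ∧
    ∀ a b : ℕ, (N'.arc a b = true ↔
      (N.arc a b = true ∧ a ≠ px ∧ a ≠ py ∧ b ≠ px ∧ b ≠ py) ∨
        (a = z ∧ b = x) ∨ (a = q ∧ b = y))

def CherryStep (N N' : Network) : Prop :=
  ∃ x y : ℕ, ReducesCherry N N' x y ∨ ReducesRetCherry N N' x y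

/-- A network consisting of the root and a single leaf. -/
def IsSingleLeaf (N : Network) : Prop := ∃ x : ℕ, x ≠ N.root ∧ N.verts = {N.root, x}

/-- Orchard: reducible to a single leaf by cherry and reticulated cherry reductions. -/
def IsOrchard (N : Network) : Prop :=
  ∃ N' : Network, Relation.ReflTransGen CherryStep N N' ∧ IsSingleLeaf N'

noncomputable def LOR (N : Network) : ℕ := leafAddDist IsOrchard N

/-- Tree-based: there is a spanning tree (a choice of one incoming arc for each
non-root vertex) all of whose leaves are leaves of `N`. -/
def IsTreeBased (N : Network) : Prop :=
  ∃ T : ℕ → ℕ → Bool, (∀ u v : ℕ, T u v = true → N.arc u v = true) ∧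
    (∀ v ∈ N.verts, v ≠ N.root → (N.verts.filter fun u => T u v = true).card = 1) ∧
    (∀ v ∈ N.verts, ¬ IsLeaf N v → ∃ w : ℕ, T v w = true)

noncomputable def LTB (N : Network) : ℕ := leafAddDist IsTreeBased N

/-- A zig-zag trail: a nonempty duplicate-free sequence of arcs in which
consecutive arcs share a tail or share a head. -/
def IsZigZag (N : Network) (s : List (ℕ × ℕ)) : Prop :=
  s ≠ [] ∧ s.Nodup ∧ (∀ a ∈ s, N.arc a.1 a.2 = true) ∧
    List.Chain' (fun a b : ℕ × ℕ => a.1 = b.1 ∨ a.2 = b.2) s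

def IsMaximalZigZag (N : Network) (s : List (ℕ × ℕ)) : Prop :=
  IsZigZag N s ∧ ∀ t : List (ℕ × ℕ), IsZigZag N t → s.Sublist t → t.length = s.length

/-- A W-fence: a maximal zig-zag trail of even length whose two end-arc tails
are both reticulations. -/
def IsWFence (N : Network) (s : List (ℕ × ℕ)) : Prop :=
  IsMaximalZigZag N s ∧ s.length % 2 = 0 ∧ 2 ≤ s.length ∧
    IsRet N (s.headD (0, 0)).1 ∧ IsRet N (s.getLastD (0, 0)).1

/-- An N-fence: a maximal zig-zag trail of odd length exactly one of whose
end-arc tails is a reticulation. -/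
def IsNFence (N : Network) (s : List (ℕ × ℕ)) : Prop :=
  IsMaximalZigZag N s ∧ s.length % 2 = 1 ∧
    Xor' (IsRet N (s.headD (0, 0)).1) (IsRet N (s.getLastD (0, 0)).1)

/-- A zig-zag decomposition: a set of maximal zig-zag trails partitioning the
non-root arcs of the network. -/
def IsZigZagDecomposition (N : Network) (D : Set (List (ℕ × ℕ))) : Prop :=
  (∀ s ∈ D, IsMaximalZigZag N s) ∧
  (∀ s ∈ D, ∀ p ∈ s, p.1 ≠ N.root) ∧
  (∀ a b : ℕ, N.arc a b = true → a ≠ N.root → ∃! s : List (ℕ × ℕ), s ∈ D ∧ (a, b) ∈ s)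

/-- A cherry shape: two arcs with a common tail. -/
def IsCherryShape (N : Network) (s : Set (ℕ × ℕ)) : Prop :=
  ∃ p x y : ℕ, x ≠ y ∧ N.arc p x = true ∧ N.arc p y = true ∧
    s = {(p, x), (p, y)}

/-- A reticulated cherry shape: arcs p_x x, p_y p_x, p_y y where p_x is a reticulation;
its middle arc is p_y p_x. -/
def IsRetCherryShape (N : Network) (s : Set (ℕ × ℕ)) : Prop :=
  ∃ x y px py : ℕ, IsRet N px ∧ N.arc px x = true ∧ N.arc py px = true ∧
    N.arc py y = true ∧ y ≠ px ∧ s = {(px, x), (py, px), (py, y)}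

/-- `s` is a reticulated cherry shape with middle arc `(u, r)`. -/
def IsMiddleArcOf (N : Network) (s : Set (ℕ × ℕ)) (u r : ℕ) : Prop :=
  ∃ x y : ℕ, IsRet N r ∧ N.arc r x = true ∧ N.arc u r = true ∧ N.arc u y = true ∧
    y ≠ r ∧ s = {(r, x), (u, r), (u, y)}

/-- A cherry cover: cherry shapes and reticulated cherry shapes covering every
non-root arc exactly once. -/
def IsCherryCover (N : Network) (P : Set (Set (ℕ × ℕ))) : Prop :=
  (∀ s ∈ P, IsCherryShape N s ∨ IsRetCherryShape N s) ∧
  (∀ a b : ℕ, N.arc a b = true → a ≠ N.root →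
    ∃! s : Set (ℕ × ℕ), s ∈ P ∧ (a, b) ∈ s)

/-- The internal vertices of a shape are the tails of its arcs. -/
def shapeInternals (s : Set (ℕ × ℕ)) : Set ℕ := {p : ℕ | ∃ x : ℕ, (p, x) ∈ s}

/-- The endpoints of a shape: heads of its arcs that are not tails of its arcs. -/
def shapeEndpoints (s : Set (ℕ × ℕ)) : Set ℕ :=
  {x : ℕ | (∃ p : ℕ, (p, x) ∈ s) ∧ ∀ y : ℕ, (x, y) ∉ s}

/-- In the auxiliary graph, shape `B` is directly above shape `C` if an internal
vertex of `C` is an endpoint of `B`. -/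
def DirectlyAbove (B C : Set (ℕ × ℕ)) : Prop :=
  ∃ v : ℕ, v ∈ shapeEndpoints B ∧ v ∈ shapeInternals C

/-- The auxiliary graph of the cherry cover `P` contains a directed cycle. -/
def HasCyclicAux (P : Set (Set (ℕ × ℕ))) : Prop :=
  ∃ s ∈ P, Relation.TransGen
    (fun B C : Set (ℕ × ℕ) => B ∈ P ∧ C ∈ P ∧ DirectlyAbove B C) s s

/-- A non-temporal labelling of `N`. -/
def IsNonTemporal (N : Network) (t : ℕ → ℝ) : Prop :=
  (∀ u v : ℕ, N.arc u v = true → t u ≤ t v) ∧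
  (∀ u v : ℕ, N.arc u v = true → t u = t v → IsRet N v) ∧
  (∀ u : ℕ, IsInternal N u → ∃ v : ℕ, N.arc u v = true ∧ t u < t v) ∧
  (∀ r u v : ℕ, IsRet N r → N.arc u r = true → N.arc v r = true → u ≠ v →
    ¬ (t u = t r ∧ t v = t r))

/-- An inret: a reticulation with no incoming horizontal arc
(i.e. both incoming arcs vertical). -/
def Inret (N : Network) (t : ℕ → ℝ) (r : ℕ) : Prop :=
  IsRet N r ∧ ∀ u : ℕ, N.arc u r = true → t u ≠ t r

noncomputable def inretCount (N : Network) (t : ℕ → ℝ) : ℕ := {r : ℕ | Inret N t r}.ncard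

/-- HGT-consistent labelling: a non-temporal labelling in which every reticulation
has exactly one incoming horizontal arc. -/
def IsHGTConsistent (N : Network) (t : ℕ → ℝ) : Prop :=
  IsNonTemporal N t ∧ ∀ r : ℕ, IsRet N r → ∃! u : ℕ, N.arc u r = true ∧ t u = t r

/-- V_OR: the minimum number of inrets over all non-temporal labellings. -/
noncomputable def VOR (N : Network) : ℕ :=
  sInf {k : ℕ | ∃ t : ℕ → ℝ, IsNonTemporal N t ∧ inretCount N t = k}

/-- The network `N` is the result of the vertex-cover reduction applied to `G`. -/
def IsVCReduction {α : Type} [Fintype α] [DecidableEq α] (G : SimpleGraph α)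
    (N : Network) : Prop :=
  ∃ (R W L M : α → ℕ → ℕ) (P : α → ℕ) (S : ℕ → ℕ) (rho : ℕ)
    (e : ℕ → α) (pi tau : α → α → ℕ),
    (∀ v : α, ∃! i : ℕ, 1 ≤ i ∧ i ≤ Fintype.card α ∧ e i = v) ∧
    (∀ v u : α, G.Adj v u → pi v u ∈ ({1, 2, 3} : Set ℕ)) ∧
    (∀ v u u' : α, G.Adj v u → G.Adj v u' → pi v u = pi v u' → u = u') ∧
    (∀ v u : α, G.Adj v u → tau v u ∈ ({5, 6, 7} : Set ℕ)) ∧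
    (∀ v u u' : α, G.Adj v u → G.Adj v u' → tau v u = tau v u' → u = u') ∧
    Function.Injective
      (fun z : (α × Fin 8) ⊕ (α × Fin 7) ⊕ (α × Fin 5) ⊕ (α × Fin 4) ⊕ α ⊕
          (Fin (Fintype.card α - 1)) ⊕ Unit =>
        match z with
        | Sum.inl (v, i) => R v i.1
        | Sum.inr (Sum.inl (v, i)) => W v (i.1 + 1)
        | Sum.inr (Sum.inr (Sum.inl (v, i))) => L v (i.1 + 1)
        | Sum.inr (Sum.inr (Sum.inr (Sum.inl (v, i)))) => M v (i.1 + 1)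
        | Sum.inr (Sum.inr (Sum.inr (Sum.inr (Sum.inl v)))) => P v
        | Sum.inr (Sum.inr (Sum.inr (Sum.inr (Sum.inr (Sum.inl i))))) => S (i.1 + 1)
        | Sum.inr (Sum.inr (Sum.inr (Sum.inr (Sum.inr (Sum.inr _))))) => rho) ∧
    N.root = rho ∧
    (∀ x : ℕ, x ∈ N.verts ↔
      (∃ v i, i ≤ 7 ∧ x = R v i) ∨ (∃ v i, 1 ≤ i ∧ i ≤ 7 ∧ x = W v i) ∨
      (∃ v i, 1 ≤ i ∧ i ≤ 5 ∧ x = L v i) ∨ (∃ v i, 1 ≤ i ∧ i ≤ 4 ∧ x = M v i) ∨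
      (∃ v, x = P v) ∨ (∃ i, 1 ≤ i ∧ i ≤ Fintype.card α - 1 ∧ x = S i) ∨ x = rho) ∧
    (∀ a b : ℕ, N.arc a b = true ↔
      (a = rho ∧ b = S 1) ∨
      (∃ i, 1 ≤ i ∧ i ≤ Fintype.card α - 2 ∧ a = S i ∧ b = S (i + 1)) ∨
      (∃ i, 1 ≤ i ∧ i ≤ Fintype.card α - 1 ∧ a = S i ∧ b = P (e i)) ∨
      (a = S (Fintype.card α - 1) ∧ b = P (e (Fintype.card α))) ∨
      (∃ v, a = P v ∧ (b = M v 4 ∨ b = W v 7)) ∨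
      (∃ v, a = M v 4 ∧ (b = M v 3 ∨ b = R v 0)) ∨
      (∃ v, a = M v 3 ∧ (b = M v 2 ∨ b = W v 6)) ∨
      (∃ v, a = M v 2 ∧ (b = M v 1 ∨ b = W v 5)) ∨
      (∃ v, a = M v 1 ∧ (b = R v 0 ∨ b = W v 4)) ∨
      (∃ v, a = R v 0 ∧ b = R v 1) ∨
      (∃ v i, 1 ≤ i ∧ i ≤ 6 ∧ a = W v i ∧ (b = R v i ∨ b = R v (i + 1))) ∨
      (∃ v, a = W v 7 ∧ (b = R v 7 ∨ b = L v 5)) ∨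
      (∃ v i, 1 ≤ i ∧ i ≤ 4 ∧ a = R v i ∧ b = L v i) ∨
      (∃ u v, G.Adj u v ∧ a = R u (tau u v) ∧ b = W v (pi v u)))


section Aux

lemma arc_irrefl (N : Network) {u : ℕ} (h : N.arc u u = true) : False :=
  N.acyclic u (Relation.TransGen.single h)

lemma root_no_in (N : Network) {u : ℕ} (h : N.arc u N.root = true) : False := by
  have hu : u ∈ N.verts := (N.arc_mem u _ h).1
  have hm : u ∈ N.verts.filter (fun u => N.arc u N.root = true) :=
    Finset.mem_filter.mpr ⟨hu, h⟩
  rw [Finset.card_eq_zero.mp N.root_indeg] at hm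
  exact absurd hm (Finset.notMem_empty u)

lemma out_two (N : Network) {v w1 w2 : ℕ} (h1 : N.arc v w1 = true)
    (h2 : N.arc v w2 = true) (h12 : w1 ≠ w2) :
    v ≠ N.root ∧ ∀ w, N.arc v w = true → w = w1 ∨ w = w2 := by
  have hv : v ∈ N.verts := (N.arc_mem _ _ h1).1
  have hsub : ({w1, w2} : Finset ℕ) ⊆ N.verts.filter (fun w => N.arc v w = true) := by
    intro w hw
    rcases Finset.mem_insert.mp hw with h | h
    · subst h; exact Finset.mem_filter.mpr ⟨(N.arc_mem _ _ h1).2, h1⟩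
    · rw [Finset.mem_singleton.mp h]
      exact Finset.mem_filter.mpr ⟨(N.arc_mem _ _ h2).2, h2⟩
  have hc2 : ({w1, w2} : Finset ℕ).card = 2 := Finset.card_pair h12
  have hle : 2 ≤ (N.verts.filter (fun w => N.arc v w = true)).card := by
    rw [← hc2]; exact Finset.card_le_card hsub
  have hroot : v ≠ N.root := by
    intro h; subst h; rw [N.root_outdeg] at hle; omega
  refine ⟨hroot, ?_⟩
  have hcard : (N.verts.filter (fun w => N.arc v w = true)).card = 2 := by
    rcases N.nonroot_deg v hv hroot with ⟨_, h⟩ | ⟨_, h⟩ | ⟨_, h⟩ <;> omega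
  have heq : ({w1, w2} : Finset ℕ) = N.verts.filter (fun w => N.arc v w = true) :=
    Finset.eq_of_subset_of_card_le hsub (by omega)
  intro w hw
  have hwm : w ∈ ({w1, w2} : Finset ℕ) := by
    rw [heq]; exact Finset.mem_filter.mpr ⟨(N.arc_mem _ _ hw).2, hw⟩
  rcases Finset.mem_insert.mp hwm with h | h
  · exact Or.inl h
  · exact Or.inr (Finset.mem_singleton.mp h)

lemma in_two (N : Network) {v u1 u2 : ℕ} (h1 : N.arc u1 v = true)
    (h2 : N.arc u2 v = true) (h12 : u1 ≠ u2) :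
    IsRet N v ∧ ∀ u, N.arc u v = true → u = u1 ∨ u = u2 := by
  have hv : v ∈ N.verts := (N.arc_mem _ _ h1).2
  have hsub : ({u1, u2} : Finset ℕ) ⊆ N.verts.filter (fun u => N.arc u v = true) := by
    intro u hu
    rcases Finset.mem_insert.mp hu with h | h
    · subst h; exact Finset.mem_filter.mpr ⟨(N.arc_mem _ _ h1).1, h1⟩
    · rw [Finset.mem_singleton.mp h]
      exact Finset.mem_filter.mpr ⟨(N.arc_mem _ _ h2).1, h2⟩
  have hc2 : ({u1, u2} : Finset ℕ).card = 2 := Finset.card_pair h12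
  have hle : 2 ≤ (N.verts.filter (fun u => N.arc u v = true)).card := by
    rw [← hc2]; exact Finset.card_le_card hsub
  have hroot : v ≠ N.root := by
    intro h; subst h; exact root_no_in N h1
  have hcard : (N.verts.filter (fun u => N.arc u v = true)).card = 2 := by
    rcases N.nonroot_deg v hv hroot with ⟨h, _⟩ | ⟨h, _⟩ | ⟨h, _⟩ <;> omega
  have heq : ({u1, u2} : Finset ℕ) = N.verts.filter (fun u => N.arc u v = true) :=
    Finset.eq_of_subset_of_card_le hsub (by omega)
  refine ⟨⟨hv, hcard⟩, ?_⟩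
  intro u hu
  have hum : u ∈ ({u1, u2} : Finset ℕ) := by
    rw [heq]; exact Finset.mem_filter.mpr ⟨(N.arc_mem _ _ hu).1, hu⟩
  rcases Finset.mem_insert.mp hum with h | h
  · exact Or.inl h
  · exact Or.inr (Finset.mem_singleton.mp h)

lemma ret_ne_root (N : Network) {v : ℕ} (h : IsRet N v) : v ≠ N.root := by
  intro e
  have h2 : (N.verts.filter fun u => N.arc u v = true).card = 2 := h.2
  rw [e, N.root_indeg] at h2
  exact absurd h2 (by norm_num)

lemma ret_out (N : Network) {v : ℕ} (h : IsRet N v) :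
    (∃ w, N.arc v w = true) ∧
      ∀ w1 w2, N.arc v w1 = true → N.arc v w2 = true → w1 = w2 := by
  obtain ⟨hv, hin⟩ := h
  have hroot : v ≠ N.root := ret_ne_root N ⟨hv, hin⟩
  have hin' : (N.verts.filter fun u => N.arc u v = true).card = 2 := hin
  have hout : (N.verts.filter fun w => N.arc v w = true).card = 1 := by
    rcases N.nonroot_deg v hv hroot with ⟨h1, _⟩ | ⟨_, h2⟩ | ⟨h1, _⟩ <;> omega
  obtain ⟨w, hw⟩ := Finset.card_eq_one.mp hout
  have hmem : ∀ w', N.arc v w' = true → w' = w := by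
    intro w' h'
    have hm : w' ∈ N.verts.filter (fun w => N.arc v w = true) :=
      Finset.mem_filter.mpr ⟨(N.arc_mem _ _ h').2, h'⟩
    rw [hw] at hm; exact Finset.mem_singleton.mp hm
  have harcw : N.arc v w = true := by
    have hm : w ∈ N.verts.filter (fun w => N.arc v w = true) := by
      rw [hw]; exact Finset.mem_singleton_self w
    exact (Finset.mem_filter.mp hm).2
  exact ⟨⟨w, harcw⟩, fun w1 w2 a b => (hmem w1 a).trans (hmem w2 b).symm⟩

/-- The key lemma: the forced reticulated cherry shapes along an N-fence. -/
lemma nfence_key (N : Network) (s : List (ℕ × ℕ)) (hz : IsZigZag N s)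
    (hord : IsRet N ((s.headD (0, 0)).1))
    (P : Set (Set (ℕ × ℕ))) (hP : IsCherryCover N P) :
    ∀ j : ℕ, 1 ≤ j → 2 * j + 1 ≤ s.length →
      ∀ c : ℕ, N.arc (s.getD (2 * j - 2) (0, 0)).2 c = true →
        ({((s.getD (2 * j - 2) (0, 0)).2, c), s.getD (2 * j - 1) (0, 0),
            s.getD (2 * j) (0, 0)} : Set (ℕ × ℕ)) ∈ P := by
  obtain ⟨hne, hnd, harcs, hch⟩ := hz
  set a : ℕ → ℕ × ℕ := fun i => s.getD i (0, 0) with ha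
  have hgetd : ∀ i (hi : i < s.length), a i = s.get ⟨i, hi⟩ := by
    intro i hi
    simp only [ha]
    exact List.getD_eq_get s (0, 0) ⟨i, hi⟩
  have harc' : ∀ i, i < s.length → N.arc (a i).1 (a i).2 = true := by
    intro i hi
    refine harcs (a i) ?_
    rw [hgetd i hi]
    exact s.get_mem ⟨i, hi⟩
  have hdist : ∀ i k, i < s.length → k < s.length → i ≠ k → a i ≠ a k := by
    intro i k hi hk hik heq
    rw [hgetd i hi, hgetd k hk] at heq
    have := List.nodup_iff_injective_get.mp hnd heq
    exact hik (by simpa using congrArg Fin.val this)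
  have hchain : ∀ i, i + 1 < s.length →
      (a i).1 = (a (i + 1)).1 ∨ (a i).2 = (a (i + 1)).2 := by
    intro i hi
    have h := List.isChain_iff_getElem.mp hch i (by omega)
    rw [hgetd i (by omega), hgetd (i + 1) hi]
    exact h
  have hord' : IsRet N (a 0).1 := by
    have he : s.headD (0, 0) = a 0 := by
      cases s with
      | nil => exact absurd rfl hne
      | cons p t => rfl
    rwa [he] at hord
  -- the alternation of the zig-zag trail
  have alt : ∀ i, i + 1 < s.length →
      ((i % 2 = 0 → (a i).2 = (a (i + 1)).2) ∧
        (i % 2 = 1 → (a i).1 = (a (i + 1)).1)) := by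
    intro i
    induction i using Nat.strong_induction_on with
    | _ i IH =>
      intro hi1
      constructor
      · intro hev
        rcases hchain i hi1 with ht | hh
        · exfalso
          have hi0 : i < s.length := by omega
          rcases Nat.eq_zero_or_pos i with h0 | h0
          · subst h0
            have hne01 : a 0 ≠ a 1 := hdist 0 1 (by omega) (by omega) (by omega)
            have harc1 : N.arc (a 0).1 (a 1).2 = true := by
              have := harc' 1 hi1
              rwa [← ht] at this
            have := (ret_out N hord').2 _ _ (harc' 0 (by omega)) harc1
            exact hne01 (Prod.ext ht this)
          · have hprev := (IH (i - 1) (by omega) (by omega)).2 (by omega)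
            rw [show i - 1 + 1 = i from by omega] at hprev
            have harc0 : N.arc (a i).1 (a (i - 1)).2 = true := by
              have := harc' (i - 1) (by omega)
              rwa [hprev] at this
            have harc1 : N.arc (a i).1 (a i).2 = true := harc' i hi0
            have harc2 : N.arc (a i).1 (a (i + 1)).2 = true := by
              have := harc' (i + 1) hi1
              rwa [← ht] at this
            have d01 : (a (i - 1)).2 ≠ (a i).2 := fun h =>
              hdist (i - 1) i (by omega) hi0 (by omega) (Prod.ext hprev h)
            have d02 : (a (i - 1)).2 ≠ (a (i + 1)).2 := fun h =>
              hdist (i - 1) (i + 1) (by omega) hi1 (by omega)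
                (Prod.ext (hprev.trans ht) h)
            have d12 : (a i).2 ≠ (a (i + 1)).2 := fun h =>
              hdist i (i + 1) hi0 hi1 (by omega) (Prod.ext ht h)
            rcases (out_two N harc0 harc1 d01).2 _ harc2 with h | h
            · exact d02 h.symm
            · exact d12 h.symm
        · exact hh
      · intro hodd
        rcases hchain i hi1 with ht | hh
        · exact ht
        · exfalso
          have hi0 : i < s.length := by omega
          have hprev := (IH (i - 1) (by omega) (by omega)).1 (by omega)
          rw [show i - 1 + 1 = i from by omega] at hprev
          have harc0 : N.arc (a (i - 1)).1 (a i).2 = true := by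
            have := harc' (i - 1) (by omega)
            rwa [hprev] at this
          have harc1 : N.arc (a i).1 (a i).2 = true := harc' i hi0
          have harc2 : N.arc (a (i + 1)).1 (a i).2 = true := by
            have := harc' (i + 1) hi1
            rwa [← hh] at this
          have d01 : (a (i - 1)).1 ≠ (a i).1 := fun h =>
            hdist (i - 1) i (by omega) hi0 (by omega) (Prod.ext h hprev)
          have d02 : (a (i - 1)).1 ≠ (a (i + 1)).1 := fun h =>
            hdist (i - 1) (i + 1) (by omega) hi1 (by omega)
              (Prod.ext h (hprev.trans hh))
          have d12 : (a i).1 ≠ (a (i + 1)).1 := fun h =>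
            hdist i (i + 1) hi0 hi1 (by omega) (Prod.ext h hh)
          rcases (in_two N harc0 harc1 d01).2 _ harc2 with h | h
          · exact d02 h.symm
          · exact d12 h.symm
  -- main induction
  intro j
  induction j using Nat.strong_induction_on with
  | _ j IH =>
    intro hj1 hjlen c hc
    obtain ⟨jm, rfl⟩ : ∃ jm, j = jm + 1 := ⟨j - 1, by omega⟩
    rw [show 2 * (jm + 1) - 2 = 2 * jm from by omega] at hc
    rw [show 2 * (jm + 1) - 2 = 2 * jm from by omega,
      show 2 * (jm + 1) - 1 = 2 * jm + 1 from by omega,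
      show 2 * (jm + 1) = 2 * jm + 2 from by omega]
    show ({((a (2 * jm)).2, c), a (2 * jm + 1), a (2 * jm + 2)} : Set (ℕ × ℕ)) ∈ P
    have hm0 : 2 * jm < s.length := by omega
    have hm1 : 2 * jm + 1 < s.length := by omega
    have hm2 : 2 * jm + 2 < s.length := by omega
    have hhead : (a (2 * jm)).2 = (a (2 * jm + 1)).2 := (alt (2 * jm) hm1).1 (by omega)
    have htail : (a (2 * jm + 1)).1 = (a (2 * jm + 2)).1 :=
      (alt (2 * jm + 1) hm2).2 (by omega)
    set x := (a (2 * jm)).2 with hx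
    set v := (a (2 * jm)).1 with hv
    set u := (a (2 * jm + 1)).1 with hu
    set y := (a (2 * jm + 2)).2 with hy
    have hc' : N.arc x c = true := hc
    have hvu : v ≠ u :=
      fun h => hdist (2 * jm) (2 * jm + 1) hm0 hm1 (by omega) (Prod.ext h hhead)
    have hxy : x ≠ y := fun h =>
      hdist (2 * jm + 1) (2 * jm + 2) hm1 hm2 (by omega)
        (Prod.ext htail (hhead.symm.trans h))
    have hvx : N.arc v x = true := harc' (2 * jm) hm0
    have hux : N.arc u x = true := by
      have := harc' (2 * jm + 1) hm1
      rwa [← hhead] at this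
    have huy : N.arc u y = true := by
      have := harc' (2 * jm + 2) hm2
      rwa [← htail] at this
    obtain ⟨hxret, hinx⟩ := in_two N hvx hux hvu
    have hxroot : x ≠ N.root := ret_ne_root N hxret
    obtain ⟨T, ⟨hTP, hcT⟩, hTuniq⟩ := hP.2 x c hc' hxroot
    rcases hP.1 T hTP with ⟨p, α, β, hab, hpa, hpb, rfl⟩ |
      ⟨xx, yy, px, py, hpxret, hpxx, hpypx, hpyy, hyypx, rfl⟩
    · -- cherry shape: impossible since x is a reticulation
      exfalso
      simp only [Set.mem_insert_iff, Set.mem_singleton_iff, Prod.mk.injEq] at hcT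
      have hxp : x = p := by rcases hcT with ⟨h, _⟩ | ⟨h, _⟩ <;> exact h
      rw [← hxp] at hpa hpb
      exact hab ((ret_out N hxret).2 α β hpa hpb)
    · -- reticulated cherry shape
      simp only [Set.mem_insert_iff, Set.mem_singleton_iff, Prod.mk.injEq] at hcT
      rcases hcT with ⟨h1, h2⟩ | ⟨h1, h2⟩ | ⟨h1, h2⟩
      · -- (x, c) = (px, xx)
        rw [← h1] at hpxx hpypx hyypx
        rw [← h1, ← h2] at hTP
        -- now hTP : {(x, c), (py, x), (py, yy)} ∈ P, arc py x, yy ≠ x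
        rcases hinx py hpypx with hpv | hpu
        · -- py = v: impossible
          exfalso
          rw [hpv] at hpypx hpyy
          rcases Nat.eq_zero_or_pos jm with h0 | h0
          · -- base case: v is the reticulation at the start of the fence
            have hvret : IsRet N v := by
              rw [hv, show 2 * jm = 0 from by omega]; exact hord'
            have := (ret_out N hvret).2 _ _ hpypx hpyy
            exact hyypx this.symm
          · -- inductive case: the shape from step jm already covers the arc (v, x)
            have hq1 : 2 * jm - 2 + 1 = 2 * jm - 1 := by omega
            have hq2 : 2 * jm - 1 + 1 = 2 * jm := by omega
            have halt0 : (a (2 * jm - 2)).2 = (a (2 * jm - 1)).2 := by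
              have := (alt (2 * jm - 2) (by omega)).1 (by omega)
              rwa [hq1] at this
            have halt1 : (a (2 * jm - 1)).1 = v := by
              have := (alt (2 * jm - 1) (by omega)).2 (by omega)
              rw [hq2] at this
              rw [hv]; exact this
            have hprevne : a (2 * jm - 1) ≠ a (2 * jm) :=
              hdist (2 * jm - 1) (2 * jm) (by omega) hm0 (by omega)
            have hx'x : (a (2 * jm - 1)).2 ≠ x := by
              intro h
              exact hprevne (Prod.ext (by rw [halt1, hv]) (by rw [h, hx]))
            have hvx' : N.arc v (a (2 * jm - 1)).2 = true := by
              have := harc' (2 * jm - 1) (by omega)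
              rwa [halt1] at this
            have ht0x' : N.arc (a (2 * jm - 2)).1 (a (2 * jm - 1)).2 = true := by
              have := harc' (2 * jm - 2) (by omega)
              rwa [halt0] at this
            have ht0v : (a (2 * jm - 2)).1 ≠ v := by
              intro h
              refine hdist (2 * jm - 2) (2 * jm - 1) (by omega) (by omega) (by omega) ?_
              exact Prod.ext (by rw [h, halt1]) halt0
            have hx'ret : IsRet N (a (2 * jm - 1)).2 :=
              (in_two N ht0x' hvx' ht0v).1
            obtain ⟨⟨c', hc'arc⟩, _⟩ := ret_out N hx'ret
            have hc'arc2 : N.arc (s.getD (2 * jm - 2) (0, 0)).2 c' = true := by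
              have he : (s.getD (2 * jm - 2) (0, 0)).2 = (a (2 * jm - 1)).2 := halt0
              rw [he]; exact hc'arc
            have hS := IH jm (by omega) (by omega) (by omega) c' hc'arc2
            rw [show 2 * jm - 2 = 2 * jm - 2 from rfl] at hS
            -- hS : {((a (2*jm-2)).2, c'), a (2*jm-1), a (2*jm)} ∈ P
            have hSmem : ({((s.getD (2 * jm - 2) (0, 0)).2, c'),
                s.getD (2 * jm - 1) (0, 0), s.getD (2 * jm) (0, 0)} : Set (ℕ × ℕ)) ∈ P := hS
            have hSmem' : ({((a (2 * jm - 1)).2, c'), a (2 * jm - 1), a (2 * jm)} :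
                Set (ℕ × ℕ)) ∈ P := by
              have he : (s.getD (2 * jm - 2) (0, 0)).2 = (a (2 * jm - 1)).2 := halt0
              rw [← he]
              exact hSmem
            -- uniqueness of the shape covering the arc (v, x) = a (2*jm)
            have hvroot : v ≠ N.root := (out_two N hvx' hvx hx'x).1
            obtain ⟨W, _, hWuniq⟩ := hP.2 v x hvx hvroot
            have hAvx : a (2 * jm) = (v, x) := by rw [hv, hx]
            have hmemT : ((v, x) : ℕ × ℕ) ∈
                ({(x, c), (py, x), (py, yy)} : Set (ℕ × ℕ)) := by
              rw [hpv]
              exact Set.mem_insert_of_mem _ (Set.mem_insert _ _)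
            have hmemS : ((v, x) : ℕ × ℕ) ∈
                ({((a (2 * jm - 1)).2, c'), a (2 * jm - 1), a (2 * jm)} :
                  Set (ℕ × ℕ)) := by
              rw [← hAvx]
              exact Set.mem_insert_of_mem _ (Set.mem_insert_of_mem _ rfl)
            have hTS : ({(x, c), (py, x), (py, yy)} : Set (ℕ × ℕ)) =
                ({((a (2 * jm - 1)).2, c'), a (2 * jm - 1), a (2 * jm)} :
                  Set (ℕ × ℕ)) :=
              (hWuniq _ ⟨hTP, hmemT⟩).trans (hWuniq _ ⟨hSmem', hmemS⟩).symm
            have hxcS : ((x, c) : ℕ × ℕ) ∈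
                ({((a (2 * jm - 1)).2, c'), a (2 * jm - 1), a (2 * jm)} :
                  Set (ℕ × ℕ)) := by
              rw [← hTS]; exact Set.mem_insert _ _
            have hA' : a (2 * jm - 1) = ((v : ℕ), (a (2 * jm - 1)).2) := by
              rw [← halt1]
            rw [hA', hAvx] at hxcS
            simp only [Set.mem_insert_iff, Set.mem_singleton_iff, Prod.mk.injEq] at hxcS
            rcases hxcS with ⟨h, _⟩ | ⟨h, _⟩ | ⟨h, _⟩
            · exact hx'x h.symm
            · rw [← h] at hvx; exact arc_irrefl N hvx
            · rw [← h] at hvx; exact arc_irrefl N hvx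
        · -- py = u: this is the claimed shape
          rw [hpu] at hpyy hTP
          rcases (out_two N hux huy hxy).2 yy hpyy with h | h
          · exact absurd h hyypx
          · rw [h] at hTP
            have hA2 : a (2 * jm + 1) = ((u : ℕ), (x : ℕ)) := by
              rw [hu]
              exact Prod.ext rfl hhead.symm
            have hA3 : a (2 * jm + 2) = ((u : ℕ), (y : ℕ)) := by
              rw [hy]
              exact Prod.ext htail.symm rfl
            rw [hA2, hA3]
            exact hTP
      · -- (x, c) = (py, px): x would have two outgoing arcs
        exfalso
        rw [← h1] at hpypx hpyy
        exact hyypx ((ret_out N hxret).2 _ _ hpyy hpypx)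
      · -- (x, c) = (py, yy): x would have two outgoing arcs
        exfalso
        rw [← h1] at hpypx hpyy
        have h3 := (ret_out N hxret).2 _ _ hpypx hpyy
        exact hyypx h3.symm

end Aux

/-- In a tree-based network, for an N-fence `(a_1, ..., a_k)` of
length `k ≥ 3` (ordered so that `tail a_1` is a reticulation), every cherry cover
contains the reticulated cherry shapes `{head(a_{2j-1}) c_{2j-1}, a_{2j}, a_{2j+1}}`
where `c_{2j-1}` is the child of `head(a_{2j-1})`. (Lists are 0-indexed: `a_m` is
entry `m - 1`.) -/
theorem nfence_forced_shapes (N : Network) (hTB : IsTreeBased N)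
    (s : List (ℕ × ℕ)) (hN : IsNFence N s)
    (hord : IsRet N ((s.headD (0, 0)).1)) (hlen : 3 ≤ s.length)
    (P : Set (Set (ℕ × ℕ))) (hP : IsCherryCover N P) :
    ∀ j : ℕ, 1 ≤ j → 2 * j + 1 ≤ s.length →
      ∀ c : ℕ, N.arc (s.getD (2 * j - 2) (0, 0)).2 c = true →
        ({((s.getD (2 * j - 2) (0, 0)).2, c), s.getD (2 * j - 1) (0, 0),
            s.getD (2 * j) (0, 0)} : Set (ℕ × ℕ)) ∈ P :=
  nfence_key N s hN.1.1 hord P hP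

end PhyloNet
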